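/- Let v₀, v₁,…,v_N be unit vectors in ℝⁿ such that for each k = 0,…,N−1 there is an index i_k ∈ {1,…,n} with v_{k+1} − v_k = ‖v_{k+1} − v_k‖ α_{i_k}. Then the total length of the zigzag line through v₀,…,v_N satisfies L = Σ_{k=0}^{N−1} ‖v_{k+1} − v_k‖ ≤ 2/d. -/
import Mathlib


open RealInnerProductSpace

set_option maxHeartbeats 1000000

/-- If `v 0, …, v N` are unit vectors such that each difference `v (k+1) - v k` is a
nonnegative multiple `‖v (k+1) - v k‖ • α i` of one of the unit vectors `α i`, where
`⟪e, α i⟫ = d > 0` for a unit vector `e`, then the total length of the zigzag line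
through `v 0, …, v N` is at most `2 / d`. -/
theorem zigzag_length_le_two_div_d
    (n N : ℕ) (α : Fin n → EuclideanSpace ℝ (Fin n))
    (hα : LinearIndependent ℝ α) (hunit : ∀ i, ‖α i‖ = 1)
    (d : ℝ) (hd : 0 < d) (e : EuclideanSpace ℝ (Fin n)) (he : ‖e‖ = 1)
    (hde : ∀ i, ⟪e, α i⟫ = d)
    (v : ℕ → EuclideanSpace ℝ (Fin n)) (hv : ∀ k ≤ N, ‖v k‖ = 1)
    (hzig : ∀ k < N, ∃ i : Fin n, v (k + 1) - v k = ‖v (k + 1) - v k‖ • α i) :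
    ∑ k ∈ Finset.range N, ‖v (k + 1) - v k‖ ≤ 2 / d := by
  have key : ∀ k < N, ⟪e, v (k + 1) - v k⟫ = d * ‖v (k + 1) - v k‖ := by
    intro k hk
    obtain ⟨i, hi⟩ := hzig k hk
    rw [hi, inner_smul_right, hde i, mul_comm]
    rw [norm_smul, hunit, mul_one, Real.norm_eq_abs, abs_norm]
  have tele : ∑ k ∈ Finset.range N, ⟪e, v (k + 1) - v k⟫ = ⟪e, v N - v 0⟫ := by
    calc ∑ k ∈ Finset.range N, ⟪e, v (k + 1) - v k⟫
        = ∑ k ∈ Finset.range N, (⟪e, v (k + 1)⟫ - ⟪e, v k⟫) := by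
          simp [inner_sub_right]
      _ = ⟪e, v N⟫ - ⟪e, v 0⟫ := Finset.sum_range_sub (fun k => (⟪e, v k⟫ : ℝ)) N
      _ = ⟪e, v N - v 0⟫ := (inner_sub_right _ _ _).symm
  have hsum : d * ∑ k ∈ Finset.range N, ‖v (k + 1) - v k‖ = ⟪e, v N - v 0⟫ := by
    rw [Finset.mul_sum, ← tele]
    exact Finset.sum_congr rfl fun k hk => (key k (Finset.mem_range.mp hk)).symm
  have hbound : ⟪e, v N - v 0⟫ ≤ 2 := by
    calc ⟪e, v N - v 0⟫ ≤ ‖e‖ * ‖v N - v 0‖ := real_inner_le_norm _ _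
      _ ≤ 1 * (‖v N‖ + ‖v 0‖) := by
          rw [he]; exact mul_le_mul_of_nonneg_left (norm_sub_le _ _) zero_le_one
      _ = 2 := by rw [hv N le_rfl, hv 0 (Nat.zero_le N)]; norm_num
  rw [le_div_iff₀ hd, mul_comm]
  exact hsum ▸ hbound
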